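/- Let k ≥ 1 and work in the free group F_{k+1} := FreeGroup (Fin (k+1)) with free generators e_1, …, e_{k+1}. Define elements b_1, …, b_k of F_{k+1} recursively by b_1 = e_1 e_2² and b_{i+1} = b_i e_{i+1} e_{i+2}² for 1 ≤ i < k. Then the family (b_1, …, b_k, e_{k+1}) is a free basis of F_{k+1}; equivalently, the endomorphism of FreeGroup (Fin (k+1)) determined by e_i ↦ b_i for 1 ≤ i ≤ k and e_{k+1} ↦ e_{k+1} is an automorphism. -/

import Mathlib

/-- `wAux k m` is the word expressing `e_{k-m}` in terms of the new basis
elements (downwards recursion from `e_k`). -/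
def wAux (k : ℕ) : ℕ → FreeGroup (Fin (k+1))
  | 0 => FreeGroup.of ⟨k, Nat.lt_succ_self k⟩
  | m+1 =>
    (if k - (m+1) = 0 then 1
     else (FreeGroup.of (⟨k - (m+1) - 1, by omega⟩ : Fin (k+1)))⁻¹) *
    FreeGroup.of (⟨k - (m+1), by omega⟩ : Fin (k+1)) *
    (wAux k m)⁻¹ * (wAux k m)⁻¹

/-- In `F_{k+1}` with basis `e_1, …, e_{k+1}` (0-indexed here as `e_0, …, e_k`), the
recursively defined elements `b_1 = e_1 e_2²`, `b_{i+1} = b_i e_{i+1} e_{i+2}²` together with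
`e_{k+1}` form a free basis: the endomorphism sending `e_i ↦ b_i` (`1 ≤ i ≤ k`) and
`e_{k+1} ↦ e_{k+1}` is an automorphism. -/
theorem b_sequence_is_basis (k : ℕ) (hk : 1 ≤ k)
    (b : Fin k → FreeGroup (Fin (k + 1)))
    (hb0 : b ⟨0, by omega⟩ =
      FreeGroup.of (⟨0, by omega⟩ : Fin (k + 1)) *
        FreeGroup.of (⟨1, by omega⟩ : Fin (k + 1)) ^ 2)
    (hbs : ∀ (i : ℕ) (h : i + 1 < k),
      b ⟨i + 1, h⟩ = b ⟨i, by omega⟩ *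
        FreeGroup.of (⟨i + 1, by omega⟩ : Fin (k + 1)) *
        FreeGroup.of (⟨i + 2, by omega⟩ : Fin (k + 1)) ^ 2) :
    Function.Bijective
      (FreeGroup.lift (fun i : Fin (k + 1) =>
        if h : (i : ℕ) < k then b ⟨i, h⟩ else FreeGroup.of i)) := by
  set f : Fin (k+1) → FreeGroup (Fin (k+1)) :=
    fun i => if h : (i : ℕ) < k then b ⟨i, h⟩ else FreeGroup.of i with hf
  set φ : FreeGroup (Fin (k+1)) →* FreeGroup (Fin (k+1)) := FreeGroup.lift f with hφ
  set g : Fin (k+1) → FreeGroup (Fin (k+1)) :=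
    fun i => wAux k (k - (i : ℕ)) with hg
  set ψ : FreeGroup (Fin (k+1)) →* FreeGroup (Fin (k+1)) := FreeGroup.lift g with hψ
  -- φ applied to generators, when index < k
  have hfb : ∀ (j : ℕ) (h : j < k),
      φ (FreeGroup.of (⟨j, by omega⟩ : Fin (k+1))) = b ⟨j, h⟩ := by
    intro j h
    simp only [hφ, FreeGroup.lift_apply_of, hf]
    rw [dif_pos h]
  have hfk : φ (FreeGroup.of (⟨k, by omega⟩ : Fin (k+1))) =
      FreeGroup.of (⟨k, by omega⟩ : Fin (k+1)) := by
    simp only [hφ, FreeGroup.lift_apply_of, hf]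
    rw [dif_neg (by simp)]
  -- key fact A : φ ∘ wAux recovers generators
  have hA : ∀ m, m ≤ k → φ (wAux k m) = FreeGroup.of (⟨k - m, by omega⟩ : Fin (k+1)) := by
    intro m
    induction m with
    | zero =>
      intro _
      simpa [wAux] using hfk
    | succ m ih =>
      intro hm
      have ihm := ih (by omega)
      have hkm : k - m = (k - (m+1)) + 1 := by omega
      by_cases hj : k - (m+1) = 0
      · have hk' : k = m + 1 := by omega
        rw [show wAux k (m+1) =
            (1 : FreeGroup (Fin (k+1))) *
            FreeGroup.of (⟨k - (m+1), by omega⟩ : Fin (k+1)) *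
            (wAux k m)⁻¹ * (wAux k m)⁻¹ by rw [wAux, if_pos hj]]
        simp only [map_mul, map_inv, map_one]
        rw [ihm]
        have e0 : (⟨k - (m+1), by omega⟩ : Fin (k+1)) = ⟨0, by omega⟩ := by
          simp only [Fin.mk.injEq]; omega
        have e1 : (⟨k - m, by omega⟩ : Fin (k+1)) = ⟨1, by omega⟩ := by
          simp only [Fin.mk.injEq]; omega
        rw [e0, e1, hfb 0 (by omega), hb0]
        group
      · have hj1 : 1 ≤ k - (m+1) := by omega
        rw [show wAux k (m+1) =
            (FreeGroup.of (⟨k - (m+1) - 1, by omega⟩ : Fin (k+1)))⁻¹ *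
            FreeGroup.of (⟨k - (m+1), by omega⟩ : Fin (k+1)) *
            (wAux k m)⁻¹ * (wAux k m)⁻¹ by rw [wAux, if_neg hj]]
        simp only [map_mul, map_inv]
        rw [ihm]
        rw [hfb (k - (m+1) - 1) (by omega), hfb (k - (m+1)) (by omega)]
        have hrec := hbs (k - (m+1) - 1) (by omega)
        have ei : (⟨k - (m+1) - 1 + 1, by omega⟩ : Fin k) = ⟨k - (m+1), by omega⟩ := by
          simp only [Fin.mk.injEq]; omega
        have ei2 : (⟨k - (m+1) - 1 + 1, by omega⟩ : Fin (k+1)) = ⟨k - (m+1), by omega⟩ := by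
          simp only [Fin.mk.injEq]; omega
        have ei3 : (⟨k - (m+1) - 1 + 2, by omega⟩ : Fin (k+1)) = ⟨k - m, by omega⟩ := by
          simp only [Fin.mk.injEq]; omega
        rw [ei, ei2, ei3] at hrec
        rw [hrec]
        group
  -- key fact B : ψ ∘ b recovers generators
  have hgw : ∀ (j : ℕ) (h : j ≤ k),
      ψ (FreeGroup.of (⟨j, by omega⟩ : Fin (k+1))) = wAux k (k - j) := by
    intro j h
    simp [hψ, FreeGroup.lift_apply_of, hg]
  have hB : ∀ (i : ℕ) (h : i < k),
      ψ (b ⟨i, h⟩) = FreeGroup.of (⟨i, by omega⟩ : Fin (k+1)) := by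
    intro i
    induction i with
    | zero =>
      intro h
      rw [hb0, pow_two, map_mul, map_mul, hgw 0 (by omega), hgw 1 (by omega)]
      have hkk : k = (k - 1) + 1 := by omega
      rw [show wAux k (k - 0) = wAux k ((k-1)+1) by congr 1]
      rw [show wAux k ((k-1)+1) =
          (1 : FreeGroup (Fin (k+1))) *
          FreeGroup.of (⟨k - ((k-1)+1), by omega⟩ : Fin (k+1)) *
          (wAux k (k-1))⁻¹ * (wAux k (k-1))⁻¹ by rw [wAux, if_pos (by omega)]]
      have e0 : (⟨k - ((k-1)+1), by omega⟩ : Fin (k+1)) = ⟨0, by omega⟩ := by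
        simp only [Fin.mk.injEq]; omega
      rw [e0]
      group
    | succ i ih =>
      intro h
      have hrec := hbs i h
      rw [hrec, pow_two, map_mul, map_mul, map_mul, ih (by omega),
        hgw (i+1) (by omega), hgw (i+2) (by omega)]
      have h1 : k - (i+1) = (k - (i+2)) + 1 := by omega
      rw [h1]
      rw [show wAux k ((k - (i+2))+1) =
          (FreeGroup.of (⟨k - ((k - (i+2))+1) - 1, by omega⟩ : Fin (k+1)))⁻¹ *
          FreeGroup.of (⟨k - ((k - (i+2))+1), by omega⟩ : Fin (k+1)) *
          (wAux k (k - (i+2)))⁻¹ * (wAux k (k - (i+2)))⁻¹ by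
            rw [wAux, if_neg (by omega)]]
      have e1 : (⟨k - ((k - (i+2))+1) - 1, by omega⟩ : Fin (k+1)) = ⟨i, by omega⟩ := by
        simp only [Fin.mk.injEq]; omega
      have e2 : (⟨k - ((k - (i+2))+1), by omega⟩ : Fin (k+1)) = ⟨i+1, by omega⟩ := by
        simp only [Fin.mk.injEq]; omega
      rw [e1, e2]
      group
  -- the two homs are mutually inverse
  have hφψ : ∀ x, φ (ψ x) = x := by
    have : φ.comp ψ = MonoidHom.id _ := by
      apply FreeGroup.ext_hom
      intro i
      simp only [MonoidHom.comp_apply, MonoidHom.id_apply]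
      rw [hgw (i : ℕ) (by omega)]
      have := hA (k - (i : ℕ)) (by omega)
      rw [show FreeGroup.of i = FreeGroup.of (⟨(i : ℕ), i.isLt⟩ : Fin (k+1)) by simp]
      rw [this]
      congr 1
      simp only [Fin.mk.injEq]; omega
    intro x
    exact DFunLike.congr_fun this x
  have hψφ : ∀ x, ψ (φ x) = x := by
    have : ψ.comp φ = MonoidHom.id _ := by
      apply FreeGroup.ext_hom
      intro i
      simp only [MonoidHom.comp_apply, MonoidHom.id_apply]
      rw [show φ (FreeGroup.of i) = f i from FreeGroup.lift_apply_of]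
      by_cases h : (i : ℕ) < k
      · rw [hf]; simp only [dif_pos h]
        rw [hB (i : ℕ) h]
      · rw [hf]; simp only [dif_neg h]
        rw [show FreeGroup.of i = FreeGroup.of (⟨(i : ℕ), i.isLt⟩ : Fin (k+1)) by simp]
        rw [hgw (i : ℕ) (by omega)]
        have hik : (i : ℕ) = k := by omega
        rw [show k - (i : ℕ) = 0 by omega]
        rw [show wAux k 0 = FreeGroup.of (⟨k, by omega⟩ : Fin (k+1)) from rfl]
        congr 1
        simp only [Fin.mk.injEq]; omega
    intro x
    exact DFunLike.congr_fun this x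
  exact Function.bijective_iff_has_inverse.mpr ⟨ψ, hψφ, hφψ⟩
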